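/- Let n ≥ 2, 0 < ε ≤ 1, T > 0, let Ω ⊂ ℝⁿ be a bounded open set, and let ω₀ ∈ ℝⁿ be a unit vector. Let A = (A₀,…,A_n) : ℝ^{1+n} → ℝ^{n+1} be continuous with support contained in (0,T)×Ω, and let δ ≥ 0 be such that for every unit vector ω ∈ ℝⁿ with |ω − ω₀| < ε/2 and every x ∈ ℝⁿ, | ∫_ℝ (1,−ω)·A(s, x − sω) ds | ≤ δ. Then for every τ ∈ ℝ and ξ ∈ ℝⁿ such that ξ ≠ 0, |τ| < (ε/8)|ξ|, and ξ·ω₁ = 0 for some unit vector ω₁ with |ω₁ − ω₀| < ε/4, there exists a unit vector ω ∈ ℝⁿ with |ω − ω₀| ≤ ε/2 and ω·ξ = τ such that | (1,−ω)·Â(τ,ξ) | ≤ μ(Ω_T) · δ, where Â denotes the space-time Fourier transform Â(τ,ξ) = ∫_{ℝ^{1+n}} e^{−i(sτ + y·ξ)} A(s,y) dy ds (applied componentwise) and μ(Ω_T) is the Lebesgue measure of Ω_T = { x ∈ ℝⁿ : dist(x, Ω) ≤ T }. -/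

import Mathlib

open MeasureTheory
open scoped RealInnerProductSpace

set_option maxHeartbeats 1000000 in
/-- **Corollary 2 of the paper (quantitative form)**: if the light-ray transform of the
vector potential `A` is bounded by `δ` uniformly over directions `ω` in the partial-data
cap `|ω − ω₀| < ε/2`, then for every frequency `(τ,ξ)` with `ξ ≠ 0` orthogonal to some
unit vector `ω₁` with `|ω₁ − ω₀| < ε/4` and `|τ| < (ε/8)|ξ|`, there is a unit vector `ω`
with `|ω − ω₀| ≤ ε/2` and `ω·ξ = τ` such that `|(1,−ω)·Â(τ,ξ)| ≤ μ(Ω_T) δ`, where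
`Ω_T = {x : dist(x,Ω) ≤ T}`. -/
theorem lightray_bound_implies_fourier_bound
    (n : ℕ) (hn : 2 ≤ n) (ε : ℝ) (hε0 : 0 < ε) (hε1 : ε ≤ 1)
    (T : ℝ) (hT : 0 < T)
    (Ω : Set (EuclideanSpace ℝ (Fin n))) (hΩopen : IsOpen Ω)
    (hΩbdd : Bornology.IsBounded Ω)
    (ω₀ : EuclideanSpace ℝ (Fin n)) (hω₀ : ‖ω₀‖ = 1)
    (A : Fin (n + 1) → ℝ × EuclideanSpace ℝ (Fin n) → ℝ)
    (hA : ∀ i, Continuous (A i))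
    (hAsupp : ∀ i, tsupport (A i) ⊆ Set.Ioo (0 : ℝ) T ×ˢ Ω)
    (δ : ℝ) (hδ : 0 ≤ δ)
    (hray : ∀ ω : EuclideanSpace ℝ (Fin n), ‖ω‖ = 1 → ‖ω - ω₀‖ < ε / 2 →
      ∀ x : EuclideanSpace ℝ (Fin n),
        |∫ s : ℝ, (A 0 (s, x - s • ω) - ∑ k : Fin n, ω k * A k.succ (s, x - s • ω))| ≤ δ) :
    ∀ (τ : ℝ) (ξ : EuclideanSpace ℝ (Fin n)),
      ξ ≠ 0 → |τ| < (ε / 8) * ‖ξ‖ →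
      (∃ ω₁ : EuclideanSpace ℝ (Fin n), ‖ω₁‖ = 1 ∧ ‖ω₁ - ω₀‖ < ε / 4 ∧ ⟪ξ, ω₁⟫ = 0) →
      ∃ ω : EuclideanSpace ℝ (Fin n),
        ‖ω‖ = 1 ∧ ‖ω - ω₀‖ ≤ ε / 2 ∧ ⟪ω, ξ⟫ = τ ∧
        ‖∫ p : ℝ × EuclideanSpace ℝ (Fin n),
            Complex.exp (-Complex.I * ((p.1 * τ + ⟪p.2, ξ⟫ : ℝ) : ℂ)) *
              (((A 0 p : ℝ) : ℂ) - ∑ k : Fin n, (ω k : ℂ) * ((A k.succ p : ℝ) : ℂ))‖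
          ≤ (volume {x : EuclideanSpace ℝ (Fin n) | Metric.infDist x Ω ≤ T}).toReal * δ := by
  intro τ ξ hξ hτ ⟨ω₁, hω₁n, hω₁d, hperp⟩
  have hξ0 : (0:ℝ) < ‖ξ‖ := norm_pos_iff.mpr hξ
  set a : ℝ := τ / ‖ξ‖ with ha_def
  have ha8 : |a| < ε / 8 := by
    rw [ha_def, abs_div, abs_of_pos hξ0, div_lt_iff₀ hξ0]
    exact hτ
  have ha1 : a ^ 2 ≤ 1 := by
    have : |a| ≤ 1 := le_of_lt (lt_of_lt_of_le ha8 (by linarith))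
    nlinarith [abs_nonneg a, sq_abs a]
  set c : ℝ := Real.sqrt (1 - a ^ 2) with hc_def
  have hc0 : 0 ≤ c := Real.sqrt_nonneg _
  have hc2 : c ^ 2 = 1 - a ^ 2 := Real.sq_sqrt (by linarith)
  have hc1 : c ≤ 1 := by nlinarith [sq_abs a, sq_nonneg a]
  set ω : EuclideanSpace ℝ (Fin n) := c • ω₁ + (a / ‖ξ‖) • ξ with hω_def
  have hperp' : ⟪ω₁, ξ⟫ = 0 := by rw [real_inner_comm]; exact hperp
  have hωξ : ⟪ω, ξ⟫ = τ := by
    rw [hω_def, inner_add_left, real_inner_smul_left, real_inner_smul_left, hperp',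
      real_inner_self_eq_norm_sq, mul_zero, zero_add, pow_two, ← mul_assoc,
      div_mul_cancel₀ _ hξ0.ne', ha_def, div_mul_cancel₀ _ hξ0.ne']
  have hωn : ‖ω‖ = 1 := by
    have h1 : ‖ω‖ ^ 2 = 1 := by
      rw [hω_def, norm_add_sq_real, real_inner_smul_left, real_inner_smul_right, hperp',
        norm_smul, norm_smul, hω₁n]
      simp only [Real.norm_eq_abs, abs_of_nonneg hc0]
      rw [abs_div, abs_of_pos hξ0, div_mul_cancel₀ _ (ne_of_gt hξ0)]
      nlinarith [sq_abs a]
    calc ‖ω‖ = Real.sqrt (‖ω‖ ^ 2) := (Real.sqrt_sq (norm_nonneg _)).symm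
    _ = Real.sqrt 1 := by rw [h1]
    _ = 1 := Real.sqrt_one
  have hωω₁ : ‖ω - ω₁‖ ^ 2 = 2 - 2 * c := by
    have he : ω - ω₁ = (c - 1) • ω₁ + (a / ‖ξ‖) • ξ := by rw [hω_def, sub_smul, one_smul]; abel
    rw [he, norm_add_sq_real, real_inner_smul_left, real_inner_smul_right, hperp',
      norm_smul, norm_smul, hω₁n]
    simp only [Real.norm_eq_abs]
    rw [abs_div, abs_norm, div_mul_cancel₀ _ hξ0.ne']
    nlinarith [sq_abs (c - 1), sq_abs a, hc2]
  have hωd : ‖ω - ω₀‖ < ε / 2 := by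
    have h2 : ‖ω - ω₁‖ ^ 2 ≤ 2 * a ^ 2 := by nlinarith [hc2, hc0, hc1]
    have h3 : ‖ω - ω₁‖ < ε / 4 := by
      nlinarith [norm_nonneg (ω - ω₁), hε0, ha8, sq_abs a, abs_nonneg a]
    calc ‖ω - ω₀‖ = ‖(ω - ω₁) + (ω₁ - ω₀)‖ := by rw [sub_add_sub_cancel]
    _ ≤ ‖ω - ω₁‖ + ‖ω₁ - ω₀‖ := norm_add_le _ _
    _ < ε / 2 := by linarith
  refine ⟨ω, hωn, le_of_lt hωd, hωξ, ?_⟩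
  classical
  set g : ℝ × EuclideanSpace ℝ (Fin n) → ℝ :=
    fun p => A 0 p - ∑ k : Fin n, ω k * A k.succ p with hg_def
  have hgc : Continuous g := by
    refine (hA 0).sub (continuous_finset_sum _ fun k _ => continuous_const.mul (hA k.succ))
  have hgsupp : ∀ p, g p ≠ 0 → p ∈ Set.Ioo (0:ℝ) T ×ˢ Ω := by
    intro p hp
    by_contra hmem
    have hz : ∀ i, A i p = 0 := fun i =>
      image_eq_zero_of_notMem_tsupport fun h => hmem (hAsupp i h)
    exact hp (by simp [hg_def, hz])
  set K₀ : Set (ℝ × EuclideanSpace ℝ (Fin n)) := Set.Icc (0:ℝ) T ×ˢ closure Ω with hK₀_def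
  have hK₀c : IsCompact K₀ :=
    (isCompact_Icc).prod
      (Metric.isCompact_of_isClosed_isBounded isClosed_closure hΩbdd.closure)
  have hsub : Set.Ioo (0:ℝ) T ×ˢ Ω ⊆ K₀ :=
    Set.prod_mono Set.Ioo_subset_Icc_self subset_closure
  have hg0 : ∀ p ∉ K₀, g p = 0 := by
    intro p hp
    by_contra h
    exact hp (hsub (hgsupp p h))
  set f : ℝ × EuclideanSpace ℝ (Fin n) → ℂ :=
    fun p => Complex.exp (-Complex.I * ((p.1 * τ + ⟪p.2, ξ⟫ : ℝ) : ℂ)) * ((g p : ℝ) : ℂ)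
      with hf_def
  have hfeq : ∀ p : ℝ × EuclideanSpace ℝ (Fin n),
      Complex.exp (-Complex.I * ((p.1 * τ + ⟪p.2, ξ⟫ : ℝ) : ℂ)) *
        (((A 0 p : ℝ) : ℂ) - ∑ k : Fin n, (ω k : ℂ) * ((A k.succ p : ℝ) : ℂ)) = f p := by
    intro p
    rw [hf_def]
    push_cast [hg_def]
    ring
  have hphasec : ∀ (u : ℝ × EuclideanSpace ℝ (Fin n) → ℝ), Continuous u →
      Continuous fun p => Complex.exp (-Complex.I * ((u p : ℝ) : ℂ)) := by
    intro u hu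
    exact Complex.continuous_exp.comp
      (continuous_const.mul (Complex.continuous_ofReal.comp hu))
  have hfc : Continuous f := by
    rw [hf_def]
    exact (hphasec _ ((continuous_fst.mul continuous_const).add
      (continuous_snd.inner continuous_const))).mul (Complex.continuous_ofReal.comp hgc)
  have hfint : Integrable f := hfc.integrable_of_hasCompactSupport
    (HasCompactSupport.intro hK₀c fun p hp => by simp [hf_def, hg0 p hp])
  set H : ℝ × EuclideanSpace ℝ (Fin n) → ℂ :=
    fun q => Complex.exp (-Complex.I * ((⟪q.2, ξ⟫ : ℝ) : ℂ)) *
      ((g (q.1, q.2 - q.1 • ω) : ℝ) : ℂ) with hH_def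
  have hGc : Continuous (fun q : ℝ × EuclideanSpace ℝ (Fin n) => g (q.1, q.2 - q.1 • ω)) :=
    hgc.comp (continuous_fst.prodMk (continuous_snd.sub (continuous_fst.smul continuous_const)))
  have hHc : Continuous H := by
    rw [hH_def]
    exact (hphasec _ (continuous_snd.inner continuous_const)).mul
      (Complex.continuous_ofReal.comp hGc)
  have hK₁c : IsCompact ((fun q : ℝ × EuclideanSpace ℝ (Fin n) => (q.1, q.2 + q.1 • ω)) '' K₀) :=
    hK₀c.image (continuous_fst.prodMk (continuous_snd.add (continuous_fst.smul continuous_const)))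
  have hGsupp : ∀ q : ℝ × EuclideanSpace ℝ (Fin n),
      q ∉ ((fun q : ℝ × EuclideanSpace ℝ (Fin n) => (q.1, q.2 + q.1 • ω)) '' K₀) →
      g (q.1, q.2 - q.1 • ω) = 0 := by
    intro q hq
    by_contra h
    apply hq
    refine ⟨(q.1, q.2 - q.1 • ω), hsub (hgsupp _ h), ?_⟩
    simp
  have hHint : Integrable H :=
    hHc.integrable_of_hasCompactSupport (HasCompactSupport.intro hK₁c fun q hq => by
      rw [hH_def]; simp [hGsupp q hq])
  have hph : ∀ (s : ℝ) (x : EuclideanSpace ℝ (Fin n)),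
      (s * τ + ⟪x - s • ω, ξ⟫ : ℝ) = ⟪x, ξ⟫ := by
    intro s x
    rw [inner_sub_left, real_inner_smul_left, hωξ]
    ring
  have hcalc : (∫ p : ℝ × EuclideanSpace ℝ (Fin n),
      Complex.exp (-Complex.I * ((p.1 * τ + ⟪p.2, ξ⟫ : ℝ) : ℂ)) *
        (((A 0 p : ℝ) : ℂ) - ∑ k : Fin n, (ω k : ℂ) * ((A k.succ p : ℝ) : ℂ)))
      = ∫ x : EuclideanSpace ℝ (Fin n),
          Complex.exp (-Complex.I * ((⟪x, ξ⟫ : ℝ) : ℂ)) *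
            ((∫ s : ℝ, g (s, x - s • ω) : ℝ) : ℂ) := by
    calc (∫ p : ℝ × EuclideanSpace ℝ (Fin n),
        Complex.exp (-Complex.I * ((p.1 * τ + ⟪p.2, ξ⟫ : ℝ) : ℂ)) *
          (((A 0 p : ℝ) : ℂ) - ∑ k : Fin n, (ω k : ℂ) * ((A k.succ p : ℝ) : ℂ)))
        = ∫ p : ℝ × EuclideanSpace ℝ (Fin n), f p := by simp only [hfeq]
    _ = ∫ s : ℝ, ∫ y : EuclideanSpace ℝ (Fin n), f (s, y) := by
        rw [MeasureTheory.Measure.volume_eq_prod] at hfint ⊢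
        exact MeasureTheory.integral_prod f hfint
    _ = ∫ s : ℝ, ∫ x : EuclideanSpace ℝ (Fin n), H (s, x) := by
        refine congrArg _ (funext fun s => ?_)
        rw [← integral_sub_right_eq_self (fun y => f (s, y)) (s • ω)]
        refine congrArg _ (funext fun x => ?_)
        show f (s, x - s • ω) = H (s, x)
        rw [hf_def, hH_def]
        simp only
        rw [hph s x]
    _ = ∫ x : EuclideanSpace ℝ (Fin n), ∫ s : ℝ, H (s, x) := by
        refine MeasureTheory.integral_integral_swap ?_
        have hunc : Function.uncurry (fun (s : ℝ) (x : EuclideanSpace ℝ (Fin n)) => H (s, x)) = H := by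
          funext q
          rfl
        rw [hunc, ← MeasureTheory.Measure.volume_eq_prod]
        exact hHint
    _ = ∫ x : EuclideanSpace ℝ (Fin n),
          Complex.exp (-Complex.I * ((⟪x, ξ⟫ : ℝ) : ℂ)) *
            ((∫ s : ℝ, g (s, x - s • ω) : ℝ) : ℂ) := by
        refine congrArg _ (funext fun x => ?_)
        calc (∫ s : ℝ, H (s, x))
            = ∫ s : ℝ, Complex.exp (-Complex.I * ((⟪x, ξ⟫ : ℝ) : ℂ)) *
                ((g (s, x - s • ω) : ℝ) : ℂ) := rfl
        _ = Complex.exp (-Complex.I * ((⟪x, ξ⟫ : ℝ) : ℂ)) *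
              ∫ s : ℝ, ((g (s, x - s • ω) : ℝ) : ℂ) := integral_const_mul _ _
        _ = Complex.exp (-Complex.I * ((⟪x, ξ⟫ : ℝ) : ℂ)) *
              ((∫ s : ℝ, g (s, x - s • ω) : ℝ) : ℂ) := by
              congr 1
              exact integral_ofReal (𝕜 := ℂ)
  rw [hcalc]
  set Φ : EuclideanSpace ℝ (Fin n) → ℂ :=
    fun x => Complex.exp (-Complex.I * ((⟪x, ξ⟫ : ℝ) : ℂ)) *
      ((∫ s : ℝ, g (s, x - s • ω) : ℝ) : ℂ) with hΦ_def
  set K : Set (EuclideanSpace ℝ (Fin n)) := {x | Metric.infDist x Ω ≤ T} with hK_def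
  have hnorm1 : ∀ r : ℝ, ‖Complex.exp (-Complex.I * (r : ℂ))‖ = 1 := by
    intro r
    rw [show -Complex.I * (r : ℂ) = ((-r : ℝ) : ℂ) * Complex.I by push_cast; ring,
      Complex.norm_exp_ofReal_mul_I]
  have hΦbound : ∀ x, ‖Φ x‖ ≤ δ := by
    intro x
    rw [hΦ_def]
    simp only
    rw [norm_mul, hnorm1, one_mul, Complex.norm_real, Real.norm_eq_abs]
    have := hray ω hωn hωd x
    simpa [hg_def] using this
  have hΦ0 : ∀ x ∉ K, Φ x = 0 := by
    intro x hx
    have hz : ∀ s : ℝ, g (s, x - s • ω) = 0 := by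
      intro s
      by_contra h
      obtain ⟨hs, hy⟩ := hgsupp _ h
      apply hx
      show Metric.infDist x Ω ≤ T
      calc Metric.infDist x Ω ≤ dist x (x - s • ω) := Metric.infDist_le_dist_of_mem hy
      _ = ‖s • ω‖ := by rw [dist_eq_norm]; congr 1; abel
      _ = |s| := by rw [norm_smul, hωn, Real.norm_eq_abs, mul_one]
      _ ≤ T := by rw [abs_of_pos hs.1]; exact le_of_lt hs.2
    rw [hΦ_def]
    simp [hz]
  rcases Set.eq_empty_or_nonempty Ω with hΩe | hΩne
  · have hzero : ∀ p, g p = 0 := by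
      intro p
      by_contra h
      have := (hgsupp p h).2
      rw [hΩe] at this
      exact this
    have : Φ = fun _ => 0 := by
      funext x
      rw [hΦ_def]
      simp [hzero]
    rw [this]
    simp only [integral_zero, norm_zero]
    exact mul_nonneg ENNReal.toReal_nonneg hδ
  · have hKcl : IsClosed K := isClosed_le (Metric.continuous_infDist_pt Ω) continuous_const
    have hKbdd : Bornology.IsBounded K := by
      obtain ⟨R, hR⟩ := hΩbdd.subset_closedBall 0
      refine Bornology.IsBounded.subset (Metric.isBounded_closedBall
        (x := (0 : EuclideanSpace ℝ (Fin n))) (r := R + (T + 1))) ?_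
      intro x hx
      have hlt : Metric.infDist x Ω < T + 1 := lt_of_le_of_lt hx (by linarith)
      obtain ⟨y, hy, hxy⟩ := (Metric.infDist_lt_iff hΩne).mp hlt
      have hyR : dist y 0 ≤ R := hR hy
      have htri : dist x 0 ≤ dist x y + dist y 0 := dist_triangle _ _ _
      rw [Metric.mem_closedBall]
      linarith
    have hKcomp : IsCompact K := Metric.isCompact_of_isClosed_isBounded hKcl hKbdd
    have hKfin : volume K < ⊤ := hKcomp.measure_lt_top
    have hΦm : AEStronglyMeasurable Φ (volume.restrict K) := by
      have hsm : StronglyMeasurable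
          (fun x : EuclideanSpace ℝ (Fin n) => ∫ s : ℝ, g (s, x - s • ω)) := by
        refine MeasureTheory.StronglyMeasurable.integral_prod_left
          (f := fun (s : ℝ) (x : EuclideanSpace ℝ (Fin n)) => g (s, x - s • ω)) ?_
        exact (hGc.comp continuous_id).stronglyMeasurable
      refine AEStronglyMeasurable.mul ?_ ?_
      · exact (Complex.continuous_exp.comp (continuous_const.mul
          (Complex.continuous_ofReal.comp
            (continuous_id.inner continuous_const)))).aestronglyMeasurable.restrict
      · exact (Complex.continuous_ofReal.comp_stronglyMeasurable hsm).aestronglyMeasurable.restrict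
    rw [← setIntegral_eq_integral_of_forall_compl_eq_zero hΦ0]
    calc ‖∫ x in K, Φ x‖ ≤ δ * (volume K).toReal :=
      norm_setIntegral_le_of_norm_le_const hKfin (fun x _ => hΦbound x)
    _ = (volume K).toReal * δ := mul_comm _ _
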